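/- Let N ≥ 8 be an integer divisible by 4. The N/4 − 1 linear functionals β ↦ ψ_odd^{(i,j,k,l)}(β) on ℝ^{N/4}, indexed by (i,j,k,l) ∈ S_1, are linearly independent; equivalently, the common kernel {β ∈ ℝ^{N/4} : ψ_odd^{(i,j,k,l)}(β) = 0 for all (i,j,k,l) ∈ S_1} is a one-dimensional subspace of ℝ^{N/4}. -/

import Mathlib

/-- `c_α = cos(απ/N)` -/
noncomputable def cc (N : ℕ) (a : ℤ) : ℝ := Real.cos (a * Real.pi / N)

/-- `ψ_odd^{(i,j,k,l)}(β) = ∑_{s=1}^{N/4} β_s c_{(2s−1)i} c_{(2s−1)j} c_{(2s−1)k} c_{(2s−1)l}`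
as a linear functional on `ℝ^{N/4}`; the vector `β` is 0-indexed. -/
noncomputable def psiOddLin (N : ℕ) (i j k l : ℤ) : (Fin (N / 4) → ℝ) →ₗ[ℝ] ℝ :=
  ∑ s : Fin (N / 4),
    (cc N ((2 * (s : ℕ) + 1 : ℤ) * i) * cc N ((2 * (s : ℕ) + 1 : ℤ) * j) *
      cc N ((2 * (s : ℕ) + 1 : ℤ) * k) * cc N ((2 * (s : ℕ) + 1 : ℤ) * l)) •
        LinearMap.proj s

/-- `S₁ = {(0, n+1, N/2−n, N/2−1) : 1 ≤ n ≤ N/4−1}` -/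
def S1set (N : ℕ) : Set (ℤ × ℤ × ℤ × ℤ) :=
  {x | ∃ n : ℤ, 1 ≤ n ∧ n ≤ (N : ℤ) / 4 - 1 ∧
    x = (0, n + 1, (N : ℤ) / 2 - n, (N : ℤ) / 2 - 1)}

section PsiOddAux

open Real Finset

lemma trig_id (u v : ℝ) : Real.cos (u+v) * Real.sin u * Real.sin v =
    (Real.cos (2*u) + Real.cos (2*v) - Real.cos (2*u+2*v) - 1)/4 := by
  have hu := Real.sin_sq_add_cos_sq u
  have hv := Real.sin_sq_add_cos_sq v
  rw [show 2*u+2*v = 2*(u+v) by ring, Real.cos_two_mul, Real.cos_two_mul, Real.cos_two_mul,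
    Real.cos_add]
  nlinarith [hu, hv]

lemma cos_add_nat_pi (a : ℝ) (s : ℕ) : Real.cos (a + s*π) = (-1)^s * Real.cos a := by
  induction s with
  | zero => simp
  | succ k ih =>
    have : a + (↑(k+1))*π = (a + k*π) + π := by push_cast; ring
    rw [this, Real.cos_add_pi, ih]
    ring

lemma cos_mul_cos' (a b : ℝ) : Real.cos a * Real.cos b =
    (Real.cos (a+b) + Real.cos (a-b))/2 := by
  rw [Real.cos_add, Real.cos_sub]; ring

/-- the angle `a(2s+1)π/(2M)` -/
noncomputable def ang (M : ℕ) (a : ℤ) (s : ℕ) : ℝ := a * (2*s+1) * π / (2*M)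

lemma ang_add (M : ℕ) (a b : ℤ) (s : ℕ) : ang M (a+b) s = ang M a s + ang M b s := by
  unfold ang; push_cast; ring

lemma ang_sub (M : ℕ) (a b : ℤ) (s : ℕ) : ang M (a-b) s = ang M a s - ang M b s := by
  unfold ang; push_cast; ring

lemma ang_zero (M : ℕ) (s : ℕ) : ang M 0 s = 0 := by unfold ang; push_cast; ring

lemma sum_cos_zero (M : ℕ) (hM : 1 ≤ M) (t : ℤ) (ht : t ≠ 0) (hlt : |t| < 2*M) :
    ∑ s ∈ Finset.range M, Real.cos (ang M t s) = 0 := by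
  have hM0 : (M:ℝ) ≠ 0 := Nat.cast_ne_zero.mpr (by omega)
  set θ : ℝ := t * π / (2*M) with hθ
  have hkey : ∀ s : ℕ, 2 * Real.sin θ * Real.cos (ang M t s) =
      Real.sin ((2*(s+1):ℕ)*θ) - Real.sin ((2*s:ℕ)*θ) := by
    intro s
    have h1 : ang M t s = (2*s+1)*θ := by
      rw [hθ]; unfold ang; push_cast; field_simp [hM0]
    have h2 : ((2*(s+1):ℕ)*θ : ℝ) = (2*s+1)*θ + θ := by push_cast; ring
    have h3 : ((2*s:ℕ)*θ : ℝ) = (2*s+1)*θ - θ := by push_cast; ring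
    rw [h1, h2, h3, Real.sin_add, Real.sin_sub]
    ring
  have hsin : Real.sin θ ≠ 0 := by
    intro h
    obtain ⟨n, hn⟩ := Real.sin_eq_zero_iff.mp h
    rw [hθ] at hn
    have hpi := Real.pi_ne_zero
    have h2 : ((n * (2*M) : ℤ) : ℝ) * π = (t:ℝ) * π := by
      push_cast
      field_simp [hM0] at hn
      linear_combination π * hn
    have h3 : ((n*(2*M):ℤ):ℝ) = (t:ℝ) := mul_right_cancel₀ hpi h2
    have ht2 : n * (2*(M:ℤ)) = t := by exact_mod_cast h3
    rcases eq_or_ne n 0 with rfl | hn0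
    · simp at ht2; omega
    · have hab : (2*(M:ℤ)) ≤ |t| := by
        rw [← ht2, abs_mul, abs_of_nonneg (show (0:ℤ) ≤ 2*(M:ℤ) by positivity)]
        nlinarith [Int.one_le_abs hn0, show (0:ℤ) ≤ 2*(M:ℤ) by positivity]
      omega
  have hsum : ∑ s ∈ Finset.range M, (2 * Real.sin θ * Real.cos (ang M t s)) =
      Real.sin ((2*M:ℕ)*θ) - Real.sin ((2*0:ℕ)*θ) := by
    rw [Finset.sum_congr rfl fun s _ => hkey s]
    exact Finset.sum_range_sub (fun s => Real.sin ((2*s:ℕ)*θ)) M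
  have hend : Real.sin ((2*M:ℕ)*θ) = 0 := by
    have he : ((2*M:ℕ)*θ : ℝ) = (t:ℤ) * π := by rw [hθ]; push_cast; field_simp
    rw [he]
    exact Real.sin_int_mul_pi t
  rw [hend] at hsum
  simp only [Nat.mul_zero, Nat.cast_zero, zero_mul, Real.sin_zero, sub_zero] at hsum
  rw [← Finset.mul_sum] at hsum
  rcases mul_eq_zero.mp hsum with h | h
  · rcases mul_eq_zero.mp h with h2 | h2
    · norm_num at h2
    · exact absurd h2 hsin
  · exact h

lemma sum_cos_mul_cos (M : ℕ) (hM : 1 ≤ M) (j m : ℤ) (hj : 0 < j) (hm : 0 < m)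
    (hjm : j + m < 2*M) :
    ∑ s ∈ Finset.range M, Real.cos (ang M j s) * Real.cos (ang M m s)
      = if j = m then (M:ℝ)/2 else 0 := by
  have hpt : ∀ s ∈ Finset.range M,
      Real.cos (ang M j s) * Real.cos (ang M m s)
      = (Real.cos (ang M (j+m) s) + Real.cos (ang M (j-m) s))/2 := by
    intro s _
    rw [cos_mul_cos', ang_add, ang_sub]
  rw [Finset.sum_congr rfl hpt, ← Finset.sum_div, Finset.sum_add_distrib]
  rw [sum_cos_zero M hM (j+m) (by omega) (by rw [abs_lt]; omega)]
  rcases eq_or_ne j m with rfl | hne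
  · have h0 : ∀ s ∈ Finset.range M, Real.cos (ang M (j-j) s) = 1 := by
      intro s _; rw [sub_self, ang_zero, Real.cos_zero]
    rw [Finset.sum_congr rfl h0]
    simp
  · rw [sum_cos_zero M hM (j-m) (by omega) (by rw [abs_lt]; omega)]
    simp [hne]

lemma coeff_eq (M : ℕ) (hM : 1 ≤ M) (n : ℤ) (s : ℕ) :
    cc (4*M) ((2*(s:ℕ)+1 : ℤ)*0) * cc (4*M) ((2*(s:ℕ)+1 : ℤ)*(n+1)) *
      cc (4*M) ((2*(s:ℕ)+1 : ℤ)*(2*(M:ℤ)-n)) * cc (4*M) ((2*(s:ℕ)+1 : ℤ)*(2*(M:ℤ)-1))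
    = (Real.cos (ang M n s) + Real.cos (ang M 1 s) - Real.cos (ang M (n+1) s) - 1)/4 := by
  unfold cc
  have hM0 : (M:ℝ) ≠ 0 := Nat.cast_ne_zero.mpr (by omega)
  set u : ℝ := (n:ℝ)*(2*(s:ℝ)+1)*π/(4*M) with hu
  set v : ℝ := (2*(s:ℝ)+1)*π/(4*M) with hv
  have f0 : (((2*(s:ℕ)+1 : ℤ)*0 : ℤ):ℝ) * π / ((4*M:ℕ):ℝ) = 0 := by push_cast; ring
  have f1 : (((2*(s:ℕ)+1 : ℤ)*(n+1) : ℤ):ℝ) * π / ((4*M:ℕ):ℝ) = u + v := by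
    rw [hu, hv]; push_cast; ring
  have f2 : (((2*(s:ℕ)+1 : ℤ)*(2*(M:ℤ)-n) : ℤ):ℝ) * π / ((4*M:ℕ):ℝ) = (π/2 - u) + s*π := by
    rw [hu]; push_cast; field_simp; ring
  have f3 : (((2*(s:ℕ)+1 : ℤ)*(2*(M:ℤ)-1) : ℤ):ℝ) * π / ((4*M:ℕ):ℝ) = (π/2 - v) + s*π := by
    rw [hv]; push_cast; field_simp; ring
  rw [f0, f1, f2, f3, Real.cos_zero, cos_add_nat_pi, cos_add_nat_pi,
    Real.cos_pi_div_two_sub, Real.cos_pi_div_two_sub]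
  have g1 : ang M n s = 2*u := by rw [hu]; unfold ang; push_cast; field_simp; ring
  have g2 : ang M 1 s = 2*v := by rw [hv]; unfold ang; push_cast; field_simp; ring
  have g3 : ang M (n+1) s = 2*u + 2*v := by
    rw [hu, hv]; unfold ang; push_cast; field_simp; ring
  rw [g1, g2, g3, ← trig_id]
  have hs : ((-1:ℝ)^s) * ((-1:ℝ)^s) = 1 := by
    rw [← pow_add, ← two_mul, pow_mul]; norm_num
  linear_combination (Real.cos (u+v) * Real.sin u * Real.sin v) * hs

lemma eval (M : ℕ) (hM : 2 ≤ M) (n m : ℤ)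
    (hn1 : 1 ≤ n) (hn2 : n ≤ (M:ℤ)-1) (hm1 : 1 ≤ m) (hm2 : m ≤ (M:ℤ)-1) :
    psiOddLin (4*M) 0 (n+1) (2*(M:ℤ)-n) (2*(M:ℤ)-1)
      (fun s : Fin (4*M/4) => Real.cos (ang M m (s:ℕ)))
    = (M:ℝ)/8 * ((if n = m then 1 else 0) + (if (1:ℤ) = m then 1 else 0)
        - (if n+1 = m then 1 else 0)) := by
  have hN4 : 4*M/4 = M := by omega
  simp only [psiOddLin, LinearMap.sum_apply, LinearMap.smul_apply, LinearMap.proj_apply,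
    smul_eq_mul]
  rw [Fin.sum_univ_eq_sum_range (fun s : ℕ =>
    (cc (4*M) ((2*(s:ℕ)+1 : ℤ)*0) * cc (4*M) ((2*(s:ℕ)+1 : ℤ)*(n+1)) *
      cc (4*M) ((2*(s:ℕ)+1 : ℤ)*(2*(M:ℤ)-n)) * cc (4*M) ((2*(s:ℕ)+1 : ℤ)*(2*(M:ℤ)-1))) *
      Real.cos (ang M m s)) (4*M/4), hN4]
  have hpt : ∀ s ∈ Finset.range M,
      (cc (4*M) ((2*(s:ℕ)+1 : ℤ)*0) * cc (4*M) ((2*(s:ℕ)+1 : ℤ)*(n+1)) *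
        cc (4*M) ((2*(s:ℕ)+1 : ℤ)*(2*(M:ℤ)-n)) * cc (4*M) ((2*(s:ℕ)+1 : ℤ)*(2*(M:ℤ)-1))) *
        Real.cos (ang M m s)
      = (Real.cos (ang M n s) * Real.cos (ang M m s)
          + Real.cos (ang M 1 s) * Real.cos (ang M m s)
          - Real.cos (ang M (n+1) s) * Real.cos (ang M m s)
          - Real.cos (ang M m s))/4 := by
    intro s _
    rw [coeff_eq M (by omega) n s]
    ring
  rw [Finset.sum_congr rfl hpt, ← Finset.sum_div, Finset.sum_sub_distrib,
    Finset.sum_sub_distrib, Finset.sum_add_distrib]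
  rw [sum_cos_mul_cos M (by omega) n m (by omega) (by omega) (by omega),
    sum_cos_mul_cos M (by omega) 1 m (by omega) (by omega) (by omega),
    sum_cos_mul_cos M (by omega) (n+1) m (by omega) (by omega) (by omega),
    sum_cos_zero M (by omega) m (by omega) (by rw [abs_lt]; omega)]
  split_ifs <;> ring

end PsiOddAux

open Real Finset in
theorem psiOdd_S1_linearIndependent (N : ℕ) (hN4 : 4 ∣ N) (hN8 : 8 ≤ N) :
    (S1set N).ncard = N / 4 - 1 ∧
    LinearIndependent ℝ (fun x : ↥(S1set N) =>
      psiOddLin N x.1.1 x.1.2.1 x.1.2.2.1 x.1.2.2.2) ∧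
    Module.finrank ℝ
      ↥(⨅ x ∈ S1set N, LinearMap.ker (psiOddLin N x.1 x.2.1 x.2.2.1 x.2.2.2)) = 1 := by
  obtain ⟨M, rfl⟩ := hN4
  have hM2 : 2 ≤ M := by omega
  have hKdiv4 : ((4*M:ℕ):ℤ)/4 - 1 = (M:ℤ) - 1 := by push_cast; omega
  have hKdiv2 : ((4*M:ℕ):ℤ)/2 = 2*(M:ℤ) := by push_cast; omega
  -- Part 1 : ncard
  have hS : S1set (4*M) =
      (fun n : ℤ => ((0:ℤ), n + 1, 2*(M:ℤ) - n, 2*(M:ℤ) - 1)) '' (Set.Icc 1 ((M:ℤ)-1)) := by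
    ext x
    simp only [S1set, Set.mem_setOf_eq, Set.mem_image, Set.mem_Icc, hKdiv4, hKdiv2]
    constructor
    · rintro ⟨n, h1, h2, rfl⟩; exact ⟨n, ⟨h1, h2⟩, rfl⟩
    · rintro ⟨n, ⟨h1, h2⟩, rfl⟩; exact ⟨n, h1, h2, rfl⟩
  have hFinj : Function.Injective (fun n : ℤ => ((0:ℤ), n + 1, 2*(M:ℤ) - n, 2*(M:ℤ) - 1)) := by
    intro a b h
    have := congrArg (fun p : ℤ × ℤ × ℤ × ℤ => p.2.1) h
    simpa using this
  have hpart1 : (S1set (4*M)).ncard = 4*M/4 - 1 := by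
    rw [hS, Set.ncard_image_of_injective _ hFinj, ← Finset.coe_Icc, Set.ncard_coe_finset,
      Int.card_Icc]
    omega
  -- the family over the subtype
  have he : ∀ r : Fin (M-1),
      ((0:ℤ), (((r:ℕ):ℤ)+1) + 1, 2*(M:ℤ) - (((r:ℕ):ℤ)+1), 2*(M:ℤ) - 1) ∈ S1set (4*M) := by
    intro r
    refine ⟨((r:ℕ):ℤ)+1, by omega, ?_, ?_⟩
    · rw [hKdiv4]; have := r.2; omega
    · rw [hKdiv2]
  set e : Fin (M-1) → ↥(S1set (4*M)) := fun r => ⟨_, he r⟩ with hedef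
  have hbij : Function.Bijective e := by
    constructor
    · intro a b h
      have h2 := congrArg (fun x : ↥(S1set (4*M)) => x.1.2.1) h
      simp only [hedef] at h2
      have : (a:ℕ) = (b:ℕ) := by omega
      exact Fin.ext this
    · rintro ⟨x, hx⟩
      obtain ⟨n, h1, h2, hxe⟩ := hx
      rw [hKdiv4] at h2
      refine ⟨⟨(n-1).toNat, by omega⟩, ?_⟩
      apply Subtype.ext
      simp only [hedef, hxe, hKdiv2]
      simp only [Prod.mk.injEq]
      refine ⟨trivial, by omega, by omega, trivial⟩
  have hgind : LinearIndependent ℝ (fun r : Fin (M-1) =>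
      psiOddLin (4*M) 0 ((((r:ℕ):ℤ)+1)+1) (2*(M:ℤ)-(((r:ℕ):ℤ)+1)) (2*(M:ℤ)-1)) := by
    rw [Fintype.linearIndependent_iff]
    intro c hc
    set S : ℝ := ∑ r : Fin (M-1), c r with hSdef
    have hMR : (0:ℝ) < (M:ℝ) := by exact_mod_cast (by omega : 0 < M)
    have key : ∀ q : Fin (M-1),
        c q + (if (1:ℤ) = ((q:ℕ):ℤ)+1 then S else 0)
          - (∑ r : Fin (M-1), c r * (if (((r:ℕ):ℤ)+1)+1 = ((q:ℕ):ℤ)+1 then 1 else 0)) = 0 := by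
      intro q
      have h := LinearMap.congr_fun hc
        (fun s : Fin (4*M/4) => Real.cos (ang M (((q:ℕ):ℤ)+1) (s:ℕ)))
      simp only [LinearMap.sum_apply, LinearMap.smul_apply, smul_eq_mul,
        LinearMap.zero_apply] at h
      have hre : ∀ r ∈ (Finset.univ : Finset (Fin (M-1))),
          c r * (psiOddLin (4*M) 0 ((((r:ℕ):ℤ)+1)+1) (2*(M:ℤ)-(((r:ℕ):ℤ)+1)) (2*(M:ℤ)-1)
            (fun s : Fin (4*M/4) => Real.cos (ang M (((q:ℕ):ℤ)+1) (s:ℕ))))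
          = (M:ℝ)/8 * (c r * (if (((r:ℕ):ℤ)+1) = (((q:ℕ):ℤ)+1) then 1 else 0))
            + (M:ℝ)/8 * (c r * (if (1:ℤ) = ((q:ℕ):ℤ)+1 then 1 else 0))
            - (M:ℝ)/8 * (c r * (if ((((r:ℕ):ℤ)+1)+1) = (((q:ℕ):ℤ)+1) then 1 else 0)) := by
        intro r _
        rw [eval M hM2 (((r:ℕ):ℤ)+1) (((q:ℕ):ℤ)+1) (by omega) (by have := r.2; omega)
          (by omega) (by have := q.2; omega)]
        ring
      rw [Finset.sum_congr rfl hre, Finset.sum_sub_distrib, Finset.sum_add_distrib,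
        ← Finset.mul_sum, ← Finset.mul_sum, ← Finset.mul_sum] at h
      have e1 : ∑ r : Fin (M-1), c r * (if (((r:ℕ):ℤ)+1) = (((q:ℕ):ℤ)+1) then 1 else 0)
          = c q := by
        rw [Finset.sum_eq_single q]
        · simp
        · intro r _ hrq
          have hcond : ¬((((r:ℕ):ℤ)+1) = (((q:ℕ):ℤ)+1)) := by
            intro hh
            exact hrq (Fin.ext (by omega))
          simp [hcond]
        · intro habs; exact absurd (Finset.mem_univ q) habs
      have e2 : ∑ r : Fin (M-1), c r * (if (1:ℤ) = ((q:ℕ):ℤ)+1 then 1 else 0)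
          = (if (1:ℤ) = ((q:ℕ):ℤ)+1 then S else 0) := by
        split_ifs with hq
        · simp [hSdef]
        · simp
      rw [e1, e2] at h
      have hM8 : ((M:ℝ)/8) ≠ 0 := by positivity
      have hfin : ((M:ℝ)/8) * (c q + (if (1:ℤ) = ((q:ℕ):ℤ)+1 then S else 0)
          - (∑ r : Fin (M-1), c r * (if (((r:ℕ):ℤ)+1)+1 = ((q:ℕ):ℤ)+1 then 1 else 0))) = 0 := by
        linear_combination h
      exact (mul_eq_zero.mp hfin).resolve_left hM8
    have hzq : (0:ℕ) < M - 1 := by omega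
    have hstep : ∀ j (hj1 : j+1 < M-1), c ⟨j+1, hj1⟩ = c ⟨j, by omega⟩ := by
      intro j hj1
      have hk := key ⟨j+1, hj1⟩
      have hB : ¬((1:ℤ) = (((⟨j+1, hj1⟩ : Fin (M-1)):ℕ):ℤ)+1) := by
        simp only [Fin.val_mk]; omega
      have hsum : (∑ r : Fin (M-1), c r *
          (if (((r:ℕ):ℤ)+1)+1 = (((⟨j+1, hj1⟩ : Fin (M-1)):ℕ):ℤ)+1 then 1 else 0))
          = c ⟨j, by omega⟩ := by
        rw [Finset.sum_eq_single (⟨j, by omega⟩ : Fin (M-1))]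
        · simp
        · intro r _ hrq
          have hcond : ¬((((r:ℕ):ℤ)+1)+1 = (((⟨j+1, hj1⟩ : Fin (M-1)):ℕ):ℤ)+1) := by
            simp only [Fin.val_mk]
            intro hh
            apply hrq
            apply Fin.ext
            simp only [Fin.val_mk]
            omega
          rw [if_neg hcond, mul_zero]
        · intro habs; exact absurd (Finset.mem_univ _) habs
      rw [hsum, if_neg hB] at hk
      linarith [hk]
    have hconst : ∀ j (hj : j < M-1), c ⟨j, hj⟩ = c ⟨0, hzq⟩ := by
      intro j
      induction j with
      | zero => intro hj; rfl
      | succ k ih => intro hj; rw [hstep k hj, ih (by omega)]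
    have hSval : S = ((M:ℝ) - 1) * c ⟨0, hzq⟩ := by
      have hcc : (∑ r : Fin (M-1), c r) = ∑ _r : Fin (M-1), c ⟨0, hzq⟩ :=
        Finset.sum_congr rfl (fun r _ => by
          rw [show r = ⟨(r:ℕ), r.2⟩ from (Fin.eta r r.2).symm, hconst (r:ℕ) r.2])
      rw [hSdef, hcc, Finset.sum_const, Finset.card_univ, Fintype.card_fin, nsmul_eq_mul]
      have : ((M - 1 : ℕ) : ℝ) = (M:ℝ) - 1 := by
        have : (1:ℕ) ≤ M := by omega
        push_cast [this]; ring
      rw [this]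
    have hc0 : c ⟨0, hzq⟩ = 0 := by
      have hk := key ⟨0, hzq⟩
      have hB : (1:ℤ) = (((⟨0, hzq⟩ : Fin (M-1)):ℕ):ℤ)+1 := by simp
      have hsum : (∑ r : Fin (M-1), c r *
          (if (((r:ℕ):ℤ)+1)+1 = (((⟨0, hzq⟩ : Fin (M-1)):ℕ):ℤ)+1 then 1 else 0)) = 0 := by
        apply Finset.sum_eq_zero
        intro r _
        have hcond : ¬((((r:ℕ):ℤ)+1)+1 = (((⟨0, hzq⟩ : Fin (M-1)):ℕ):ℤ)+1) := by
          simp only [Fin.val_mk]; omega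
        rw [if_neg hcond, mul_zero]
      rw [hsum, if_pos hB, hSval] at hk
      have : (M:ℝ) * c ⟨0, hzq⟩ = 0 := by linarith [hk]
      rcases mul_eq_zero.mp this with h | h
      · linarith
      · exact h
    intro r
    rw [show r = ⟨(r:ℕ), r.2⟩ from (Fin.eta r r.2).symm, hconst (r:ℕ) r.2, hc0]
  have hindep : LinearIndependent ℝ (fun x : ↥(S1set (4*M)) =>
      psiOddLin (4*M) x.1.1 x.1.2.1 x.1.2.2.1 x.1.2.2.2) := by
    rw [← linearIndependent_equiv (Equiv.ofBijective e hbij)]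
    exact hgind
  refine ⟨hpart1, hindep, ?_⟩
  -- Part 3 : finrank of the common kernel
  have hfinS : (S1set (4*M)).Finite := by
    rw [hS]; exact (Set.finite_Icc _ _).image _
  haveI := hfinS.fintype
  have hcard : Fintype.card ↥(S1set (4*M)) = M - 1 := by
    rw [← Nat.card_eq_fintype_card, Nat.card_coe_set_eq, hpart1]
    omega
  set fam : ↥(S1set (4*M)) → Module.Dual ℝ (Fin (4*M/4) → ℝ) :=
    fun x => psiOddLin (4*M) x.1.1 x.1.2.1 x.1.2.2.1 x.1.2.2.2 with hfamdef
  have hWrank : Module.finrank ℝ (Submodule.span ℝ (Set.range fam)) = M - 1 := by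
    rw [finrank_span_eq_card hindep, hcard]
  have hkereq : (⨅ x ∈ S1set (4*M),
        LinearMap.ker (psiOddLin (4*M) x.1 x.2.1 x.2.2.1 x.2.2.2))
      = (Submodule.span ℝ (Set.range fam)).dualCoannihilator := by
    ext v
    rw [← SetLike.mem_coe (p := (Submodule.span ℝ (Set.range fam)).dualCoannihilator),
      Submodule.coe_dualCoannihilator_span]
    simp only [Set.mem_setOf_eq, Submodule.mem_iInf, LinearMap.mem_ker]
    constructor
    · intro hv f hf
      obtain ⟨x, rfl⟩ := hf
      exact hv x.1 x.2
    · intro hv x hx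
      exact hv (fam ⟨x, hx⟩) ⟨⟨x, hx⟩, rfl⟩
  rw [hkereq]
  have hdim := Subspace.finrank_add_finrank_dualCoannihilator_eq
    (Submodule.span ℝ (Set.range fam))
  have hV : Module.finrank ℝ (Fin (4*M/4) → ℝ) = M := by
    rw [Module.finrank_fintype_fun_eq_card, Fintype.card_fin]
    omega
  rw [hWrank, hV] at hdim
  omega
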